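/- Let K ⊆ ℝ² be a compact set, k ∈ ℕ, reals α_min ≤ α_max, L₁ ∈ ℝ, L₂, L₃ > 0, and for each 1 ≤ i ≤ k let S_i be a fixed function from the frontier of K into the space of continuous i-multilinear maps (ℝ²)^i → ℝ. Let (α_j)_{j∈ℕ} be a sequence of ContDiff ℝ k functions ℝ² → ℝ satisfying, for every j: α_min ≤ α_j ≤ α_max on K; α_j = α_min on the frontier of K; ∫_K α_j dx = L₁; ‖iteratedFDeriv ℝ i α_j(x)‖ ≤ L₂ for all i ≤ k, x ∈ K; ‖iteratedFDeriv ℝ k α_j(x) − iteratedFDeriv ℝ k α_j(y)‖ ≤ L₃‖x − y‖ for x, y ∈ K; and additionally iteratedFDeriv ℝ i α_j(x) = S_i(x) for every 1 ≤ i ≤ k and every x in the frontier of K. Then there exist a subsequence (α_{j_l}) and continuous functions g_i on K (for 0 ≤ i ≤ k, into the respective multilinear map spaces) with iteratedFDeriv ℝ i α_{j_l} → g_i uniformly on K, such that all the above constraints pass to the limit: α_min ≤ g_0 ≤ α_max on K, g_0 = α_min and g_i = S_i (1 ≤ i ≤ k) on the frontier of K, ∫_K g_0 = L₁, ‖g_i‖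 ≤ L₂ on K, and g_k is L₃-Lipschitz on K. -/

import Mathlib

open MeasureTheory Filter Set Topology

instance aux_findim (i : ℕ) :
    FiniteDimensional ℝ (ContinuousMultilinearMap ℝ
      (fun _ : Fin i => EuclideanSpace ℝ (Fin 2)) ℝ) := by
  induction i with
  | zero =>
    exact ((continuousMultilinearCurryFin0 ℝ (EuclideanSpace ℝ (Fin 2))
      ℝ).symm.toLinearEquiv).finiteDimensional
  | succ n ih =>
    have e := (continuousMultilinearCurryLeftEquiv ℝ
      (fun _ : Fin (n+1) => EuclideanSpace ℝ (Fin 2)) ℝ).symm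
    haveI : FiniteDimensional ℝ (EuclideanSpace ℝ (Fin 2) →L[ℝ]
        ContinuousMultilinearMap ℝ
          (fun x : Fin n => (fun _ : Fin (n+1) => EuclideanSpace ℝ (Fin 2)) x.succ) ℝ) :=
      inferInstanceAs (FiniteDimensional ℝ (EuclideanSpace ℝ (Fin 2) →L[ℝ]
        ContinuousMultilinearMap ℝ (fun _ : Fin n => EuclideanSpace ℝ (Fin 2)) ℝ))
    exact (e.toLinearEquiv).finiteDimensional

lemma aux_extract {X Y : Type*} [TopologicalSpace X] [CompactSpace X] [SequentialSpace X]
    [NormedAddCommGroup Y] [NormedSpace ℝ Y] [FiniteDimensional ℝ Y]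
    (F : ℕ → C(X, Y)) (C : ℝ)
    (hb : ∀ n x, ‖F n x‖ ≤ C)
    (he : Equicontinuous (fun n => (F n : X → Y))) :
    ∃ φ : ℕ → ℕ, StrictMono φ ∧ ∃ G : C(X, Y),
      TendstoUniformly (fun l x => F (φ l) x) (G : X → Y) atTop := by
  have hcl : IsCompact (closure (range F)) := by
    apply ArzelaAscoli.isCompact_closure_of_isClosedEmbedding
      (𝔖 := {K : Set X | IsCompact K}) (F := (DFunLike.coe : C(X, Y) → X → Y))
      (fun K hK => hK)
    · refine ⟨ContinuousMap.isUniformEmbedding_toUniformOnFunIsCompact.isEmbedding, ?_⟩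
      rw [show (UniformOnFun.ofFun {K : Set X | IsCompact K} ∘ (DFunLike.coe : C(X,Y) → X → Y))
          = ContinuousMap.toUniformOnFunIsCompact from rfl,
        ContinuousMap.range_toUniformOnFunIsCompact]
      exact UniformOnFun.isClosed_setOf_continuous CompactlyCoherentSpace.isCoherentWith
    · intro K hK x hx U hU
      have := he x U hU
      filter_upwards [this.filter_mono nhdsWithin_le_nhds] with y hy i
      obtain ⟨n, hn⟩ := i.2
      simpa [Function.comp, ← hn] using hy n
    · intro K hK x hx
      refine ⟨Metric.closedBall 0 C, isCompact_closedBall 0 C, ?_⟩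
      rintro f ⟨n, rfl⟩
      simpa [Metric.mem_closedBall, dist_zero_right] using hb n x
  obtain ⟨G, hGmem, φ, hφ, hconv⟩ :=
    hcl.tendsto_subseq (x := F) (fun n => subset_closure (mem_range_self n))
  exact ⟨φ, hφ, G, ContinuousMap.tendsto_iff_tendstoUniformly.mp hconv⟩

lemma aux_ball {V : Type*} [NormedAddCommGroup V] [NormedSpace ℝ V]
    {K : Set V} {y : V} (hy : y ∈ interior K) (hne : Kᶜ.Nonempty) :
    0 < Metric.infDist y Kᶜ ∧ Metric.ball y (Metric.infDist y Kᶜ) ⊆ K := by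
  have h1 : (0:ℝ) < Metric.infDist y Kᶜ := by
    rw [← Metric.infDist_closure]
    refine (isClosed_closure.notMem_iff_infDist_pos hne.closure).mp ?_
    rw [closure_compl]
    simpa using hy
  refine ⟨h1, fun z hz => ?_⟩
  by_contra hzK
  have := Metric.infDist_le_dist_of_mem (x := y) (show z ∈ Kᶜ from hzK)
  rw [Metric.mem_ball, dist_comm] at hz
  linarith

lemma aux_nearest {V : Type*} [NormedAddCommGroup V] [NormedSpace ℝ V] [ProperSpace V]
    {K : Set V} (hKc : IsClosed K) (hne : Kᶜ.Nonempty) {y : V} (hy : y ∈ interior K) :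
    ∃ y' ∈ frontier K, dist y y' = Metric.infDist y Kᶜ ∧ segment ℝ y' y ⊆ K := by
  obtain ⟨hr0, hball⟩ := aux_ball hy hne
  set r := Metric.infDist y Kᶜ with hr
  obtain ⟨y', hy'c, hy'd⟩ := isClosed_closure.exists_infDist_eq_dist hne.closure y
  rw [Metric.infDist_closure, ← hr] at hy'd
  have hdist : dist y y' = r := hy'd.symm
  have hsub : segment ℝ y' y ⊆ Metric.closedBall y r := by
    apply (convex_closedBall y r).segment_subset
    · rw [Metric.mem_closedBall, dist_comm]; exact hdist.le
    · simpa using hr0.le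
  have hcb : Metric.closedBall y r ⊆ K := by
    rw [← closure_ball y hr0.ne']
    calc closure (Metric.ball y r) ⊆ closure K := closure_mono hball
    _ = K := hKc.closure_eq
  refine ⟨y', ?_, hdist, hsub.trans hcb⟩
  rw [frontier_eq_closure_inter_closure]
  exact ⟨subset_closure (hcb (hsub (left_mem_segment ℝ y' y))), hy'c⟩

lemma aux_step {V : Type*} [NormedAddCommGroup V] [NormedSpace ℝ V]
    {k : ℕ} {f : V → ℝ} (hf : ContDiff ℝ (k : ℕ∞) f) {K : Set V} {L₂ L₃ : ℝ}
    (hCk : ∀ m ≤ k, ∀ x ∈ K, ‖iteratedFDeriv ℝ m f x‖ ≤ L₂)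
    (hLip : ∀ x ∈ K, ∀ y ∈ K, ‖iteratedFDeriv ℝ k f x - iteratedFDeriv ℝ k f y‖ ≤ L₃ * ‖x - y‖)
    {i : ℕ} (hik : i ≤ k) {y y' : V} (hy : y ∈ K) (hy' : y' ∈ K)
    (hseg : segment ℝ y' y ⊆ K) :
    ‖iteratedFDeriv ℝ i f y - iteratedFDeriv ℝ i f y'‖ ≤ max L₂ L₃ * ‖y - y'‖ := by
  rcases eq_or_lt_of_le hik with rfl | hlt
  · exact (hLip y hy y' hy').trans
      (mul_le_mul_of_nonneg_right (le_max_right _ _) (norm_nonneg _))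
  · have hdiff : ∀ z ∈ segment ℝ y' y, DifferentiableAt ℝ (iteratedFDeriv ℝ i f) z :=
      fun z _ => (hf.differentiable_iteratedFDeriv (by exact_mod_cast hlt)).differentiableAt
    have hbd : ∀ z ∈ segment ℝ y' y, ‖fderiv ℝ (iteratedFDeriv ℝ i f) z‖ ≤ max L₂ L₃ := by
      intro z hz
      rw [norm_fderiv_iteratedFDeriv]
      exact (hCk (i+1) hlt z (hseg hz)).trans (le_max_left _ _)
    exact Convex.norm_image_sub_le_of_norm_fderiv_le hdiff hbd (convex_segment y' y)
      (left_mem_segment ℝ y' y) (right_mem_segment ℝ y' y)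
set_option maxHeartbeats 1000000 in
theorem stmt10 (K : Set (EuclideanSpace ℝ (Fin 2))) (hK : IsCompact K)
    (k : ℕ) (αmin αmax L₁ L₂ L₃ : ℝ) (hαm : αmin ≤ αmax) (hL₂ : 0 < L₂) (hL₃ : 0 < L₃)
    (S : (i : ℕ) → EuclideanSpace ℝ (Fin 2) →
        ContinuousMultilinearMap ℝ (fun _ : Fin i => EuclideanSpace ℝ (Fin 2)) ℝ)
    (α : ℕ → EuclideanSpace ℝ (Fin 2) → ℝ)
    (hsmooth : ∀ j, ContDiff ℝ (k : ℕ∞) (α j))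
    (hbound : ∀ j, ∀ x ∈ K, αmin ≤ α j x ∧ α j x ≤ αmax)
    (hfront : ∀ j, ∀ x ∈ frontier K, α j x = αmin)
    (hvol : ∀ j, (∫ x in K, α j x) = L₁)
    (hCk : ∀ j, ∀ i ≤ k, ∀ x ∈ K, ‖iteratedFDeriv ℝ i (α j) x‖ ≤ L₂)
    (hLip : ∀ j, ∀ x ∈ K, ∀ y ∈ K,
      ‖iteratedFDeriv ℝ k (α j) x - iteratedFDeriv ℝ k (α j) y‖ ≤ L₃ * ‖x - y‖)
    (hS : ∀ j, ∀ i, 1 ≤ i → i ≤ k → ∀ x ∈ frontier K, iteratedFDeriv ℝ i (α j) x = S i x) :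
    ∃ φ : ℕ → ℕ, StrictMono φ ∧
    ∃ g : (i : ℕ) → EuclideanSpace ℝ (Fin 2) →
        ContinuousMultilinearMap ℝ (fun _ : Fin i => EuclideanSpace ℝ (Fin 2)) ℝ,
      (∀ i ≤ k, ContinuousOn (g i) K) ∧
      (∀ i ≤ k, TendstoUniformlyOn (fun l => iteratedFDeriv ℝ i (α (φ l))) (g i) atTop K) ∧
      (∀ x ∈ K, αmin ≤ g 0 x 0 ∧ g 0 x 0 ≤ αmax) ∧
      (∀ x ∈ frontier K, g 0 x 0 = αmin) ∧
      (∀ i, 1 ≤ i → i ≤ k → ∀ x ∈ frontier K, g i x = S i x) ∧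
      (∫ x in K, g 0 x 0) = L₁ ∧
      (∀ i ≤ k, ∀ x ∈ K, ‖g i x‖ ≤ L₂) ∧
      (∀ x ∈ K, ∀ y ∈ K, ‖g k x - g k y‖ ≤ L₃ * ‖x - y‖) := by
  classical
  have hKc : IsClosed K := hK.isClosed
  haveI : CompactSpace ↥K := isCompact_iff_compactSpace.mp hK
  set C : ℝ := max L₂ L₃ with hCdef
  have hC : 0 < C := lt_max_of_lt_left hL₂
  have hcont : ∀ j (i : ℕ), i ≤ k → Continuous (iteratedFDeriv ℝ i (α j)) :=
    fun j i hi => (hsmooth j).continuous_iteratedFDeriv (by exact_mod_cast hi)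
  let Φ : ℕ → C(↥K, Π i : Fin (k+1),
      ContinuousMultilinearMap ℝ (fun _ : Fin (i:ℕ) => EuclideanSpace ℝ (Fin 2)) ℝ) :=
    fun j => ⟨fun x i => iteratedFDeriv ℝ (i:ℕ) (α j) x.1,
      continuous_pi fun i => (hcont j i (Nat.lt_succ_iff.mp i.isLt)).comp
        continuous_subtype_val⟩
  have hΦapp : ∀ j x (i : Fin (k+1)), Φ j x i = iteratedFDeriv ℝ (i:ℕ) (α j) x.1 :=
    fun _ _ _ => rfl
  have hb : ∀ j x, ‖Φ j x‖ ≤ L₂ := by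
    intro j x
    rw [pi_norm_le_iff_of_nonneg hL₂.le]
    intro i
    exact hCk j i (Nat.lt_succ_iff.mp i.isLt) x.1 x.2
  have hfr : ∀ j i, i ≤ k → ∀ z ∈ frontier K,
      iteratedFDeriv ℝ i (α j) z = iteratedFDeriv ℝ i (α 0) z := by
    intro j i hi z hz
    rcases Nat.eq_zero_or_pos i with rfl | hpos
    · ext m
      simp [iteratedFDeriv_zero_apply, hfront j z hz, hfront 0 z hz]
    · rw [hS j i hpos hi z hz, hS 0 i hpos hi z hz]
  have hstep : ∀ j i, i ≤ k → ∀ y ∈ K, ∀ y' ∈ K, segment ℝ y' y ⊆ K →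
      ‖iteratedFDeriv ℝ i (α j) y - iteratedFDeriv ℝ i (α j) y'‖ ≤ C * ‖y - y'‖ :=
    fun j i hi y hy y' hy' hseg =>
      aux_step (hsmooth j) (hCk j) (hLip j) hi hy hy' hseg
  have hne : Kᶜ.Nonempty := by
    by_contra h
    rw [Set.not_nonempty_iff_eq_empty, Set.compl_empty_iff] at h
    rw [h] at hK
    exact noncompact_univ _ hK
  have hfrK : frontier K = K \ interior K := by
    rw [frontier, hKc.closure_eq]
  -- Equicontinuity
  have he : Equicontinuous (fun j => ⇑(Φ j)) := by
    intro x
    rw [Metric.equicontinuousAt_iff]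
    intro ε hε
    by_cases hxf : x.1 ∈ frontier K
    · have hf0 : ContinuousAt
          (fun z => (fun i : Fin (k+1) => iteratedFDeriv ℝ (i:ℕ) (α 0) z)) x.1 :=
        (continuous_pi fun i : Fin (k+1) =>
          hcont 0 i (Nat.lt_succ_iff.mp i.isLt)).continuousAt
      obtain ⟨δ₁, hδ₁, hδ₁p⟩ := Metric.continuousAt_iff.mp hf0 (ε/3) (by positivity)
      refine ⟨min (δ₁/2) (ε/(3*(C+1))), by positivity, ?_⟩
      intro y hyx j
      have hyx' : dist y.1 x.1 < min (δ₁/2) (ε/(3*(C+1))) := by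
        rwa [Subtype.dist_eq] at hyx
      rw [dist_pi_lt_iff hε]
      intro i
      have hik : (i:ℕ) ≤ k := Nat.lt_succ_iff.mp i.isLt
      by_cases hyf : y.1 ∈ frontier K
      · have e1 : Φ j x i = iteratedFDeriv ℝ (i:ℕ) (α 0) x.1 := hfr j i hik x.1 hxf
        have e2 : Φ j y i = iteratedFDeriv ℝ (i:ℕ) (α 0) y.1 := hfr j i hik y.1 hyf
        rw [e1, e2]
        have h2 : dist ((fun i : Fin (k+1) => iteratedFDeriv ℝ (i:ℕ) (α 0) y.1) i)
            ((fun i : Fin (k+1) => iteratedFDeriv ℝ (i:ℕ) (α 0) x.1) i) < ε/3 := by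
          refine lt_of_le_of_lt
            (dist_le_pi_dist (fun i : Fin (k+1) => iteratedFDeriv ℝ (i:ℕ) (α 0) y.1)
              (fun i : Fin (k+1) => iteratedFDeriv ℝ (i:ℕ) (α 0) x.1) i) (hδ₁p ?_)
          calc dist y.1 x.1 < min (δ₁/2) (ε/(3*(C+1))) := hyx'
            _ ≤ δ₁/2 := min_le_left _ _
            _ < δ₁ := by linarith
        rw [dist_comm] at h2
        calc dist (iteratedFDeriv ℝ (i:ℕ) (α 0) x.1) (iteratedFDeriv ℝ (i:ℕ) (α 0) y.1)
            < ε/3 := h2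
          _ < ε := by linarith
      · have hyint : y.1 ∈ interior K := by
          by_contra h
          exact hyf (by rw [hfrK]; exact ⟨y.2, h⟩)
        obtain ⟨y', hy'f, hy'd, hy'seg⟩ := aux_nearest hKc hne hyint
        have hy'K : y' ∈ K := hKc.frontier_subset hy'f
        have hρx : Metric.infDist y.1 Kᶜ ≤ dist y.1 x.1 := by
          rw [← Metric.infDist_closure]
          refine Metric.infDist_le_dist_of_mem ?_
          rw [frontier_eq_closure_inter_closure] at hxf
          exact hxf.2
        have h1 : ‖iteratedFDeriv ℝ (i:ℕ) (α j) y.1 - iteratedFDeriv ℝ (i:ℕ) (α j) y'‖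
            ≤ C * ‖y.1 - y'‖ := hstep j i hik y.1 y.2 y' hy'K hy'seg
        have hny : ‖y.1 - y'‖ = Metric.infDist y.1 Kᶜ := by
          rw [← dist_eq_norm]; exact hy'd
        have hd1 : dist y.1 x.1 < ε/(3*(C+1)) :=
          lt_of_lt_of_le hyx' (min_le_right _ _)
        have hd2 : dist y.1 x.1 < δ₁/2 := lt_of_lt_of_le hyx' (min_le_left _ _)
        have h2 : dist (iteratedFDeriv ℝ (i:ℕ) (α 0) y')
            (iteratedFDeriv ℝ (i:ℕ) (α 0) x.1) < ε/3 := by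
          refine lt_of_le_of_lt
            (dist_le_pi_dist (fun i : Fin (k+1) => iteratedFDeriv ℝ (i:ℕ) (α 0) y')
              (fun i : Fin (k+1) => iteratedFDeriv ℝ (i:ℕ) (α 0) x.1) i) (hδ₁p ?_)
          calc dist y' x.1 ≤ dist y' y.1 + dist y.1 x.1 := dist_triangle _ _ _
            _ = dist y.1 y' + dist y.1 x.1 := by rw [dist_comm]
            _ ≤ dist y.1 x.1 + dist y.1 x.1 := by rw [hy'd]; linarith [hρx]
            _ < δ₁/2 + δ₁/2 := by linarith
            _ = δ₁ := by ring
        have e1 : Φ j x i = iteratedFDeriv ℝ (i:ℕ) (α 0) x.1 := hfr j i hik x.1 hxf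
        have e2 : iteratedFDeriv ℝ (i:ℕ) (α j) y' = iteratedFDeriv ℝ (i:ℕ) (α 0) y' :=
          hfr j i hik y' hy'f
        have hsecond : dist (iteratedFDeriv ℝ (i:ℕ) (α j) y') (Φ j y i) ≤ ε/3 := by
          rw [hΦapp, dist_comm, dist_eq_norm]
          calc ‖iteratedFDeriv ℝ (i:ℕ) (α j) y.1 - iteratedFDeriv ℝ (i:ℕ) (α j) y'‖
              ≤ C * ‖y.1 - y'‖ := h1
            _ ≤ C * (ε/(3*(C+1))) := by
                refine mul_le_mul_of_nonneg_left ?_ hC.le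
                rw [hny]
                exact le_of_lt (lt_of_le_of_lt hρx hd1)
            _ ≤ ε/3 := by
                rw [show C * (ε / (3 * (C + 1))) = (C * ε) / (3 * (C + 1)) by ring,
                  div_le_div_iff₀ (by positivity) (by norm_num)]
                nlinarith [hε.le, hC.le]
        calc dist (Φ j x i) (Φ j y i)
            ≤ dist (Φ j x i) (iteratedFDeriv ℝ (i:ℕ) (α j) y')
              + dist (iteratedFDeriv ℝ (i:ℕ) (α j) y') (Φ j y i) := dist_triangle _ _ _
          _ < ε/3 + ε/3 := by
              refine add_lt_add_of_lt_of_le ?_ hsecond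
              rw [e1, e2]
              rw [dist_comm] at h2
              exact h2
          _ < ε := by linarith
    · have hxint : x.1 ∈ interior K := by
        by_contra h
        exact hxf (by rw [hfrK]; exact ⟨x.2, h⟩)
      obtain ⟨hr0, hball⟩ := aux_ball hxint hne
      refine ⟨min (Metric.infDist x.1 Kᶜ) (ε/(2*(C+1))), by positivity, ?_⟩
      intro y hyx j
      have hyx' : dist y.1 x.1 < min (Metric.infDist x.1 Kᶜ) (ε/(2*(C+1))) := by
        rwa [Subtype.dist_eq] at hyx
      rw [dist_pi_lt_iff hε]
      intro i
      have hik : (i:ℕ) ≤ k := Nat.lt_succ_iff.mp i.isLt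
      have hseg : segment ℝ x.1 y.1 ⊆ K := by
        refine ((convex_closedBall x.1 (dist y.1 x.1)).segment_subset ?_ ?_).trans
          ((Metric.closedBall_subset_ball
            (lt_of_lt_of_le hyx' (min_le_left _ _))).trans hball)
        · exact Metric.mem_closedBall_self dist_nonneg
        · exact Metric.mem_closedBall.mpr le_rfl
      have h1 := hstep j i hik y.1 y.2 x.1 x.2 hseg
      rw [dist_comm, hΦapp, hΦapp, dist_eq_norm]
      calc ‖iteratedFDeriv ℝ (i:ℕ) (α j) y.1 - iteratedFDeriv ℝ (i:ℕ) (α j) x.1‖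
          ≤ C * ‖y.1 - x.1‖ := h1
        _ ≤ C * (ε/(2*(C+1))) := by
            refine mul_le_mul_of_nonneg_left ?_ hC.le
            rw [← dist_eq_norm]
            exact (lt_of_lt_of_le hyx' (min_le_right _ _)).le
        _ < ε := by
            rw [show C * (ε / (2 * (C + 1))) = (C * ε) / (2 * (C + 1)) by ring,
              div_lt_iff₀ (by positivity)]
            nlinarith [hε, hC]
  obtain ⟨φ, hφ, G, hG⟩ := aux_extract Φ L₂ hb he
  let g : (i : ℕ) → EuclideanSpace ℝ (Fin 2) →
      ContinuousMultilinearMap ℝ (fun _ : Fin i => EuclideanSpace ℝ (Fin 2)) ℝ :=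
    fun i x => if h : i ≤ k ∧ x ∈ K then G ⟨x, h.2⟩ ⟨i, Nat.lt_succ_of_le h.1⟩ else 0
  have hgK : ∀ (i : ℕ) (hi : i ≤ k) (x : ↥K),
      g i x.1 = G x ⟨i, Nat.lt_succ_of_le hi⟩ := by
    intro i hi x
    simp only [g, dif_pos (⟨hi, x.2⟩ : i ≤ k ∧ x.1 ∈ K)]
  have huc : ∀ i, i ≤ k →
      TendstoUniformlyOn (fun l => iteratedFDeriv ℝ i (α (φ l))) (g i) atTop K := by
    intro i hi
    rw [Metric.tendstoUniformlyOn_iff]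
    intro ε hε
    filter_upwards [Metric.tendstoUniformly_iff.mp hG ε hε] with l hl x hx
    calc dist (g i x) (iteratedFDeriv ℝ i (α (φ l)) x)
        = dist (G ⟨x, hx⟩ ⟨i, Nat.lt_succ_of_le hi⟩)
          (Φ (φ l) ⟨x, hx⟩ ⟨i, Nat.lt_succ_of_le hi⟩) := by
          rw [hgK i hi ⟨x, hx⟩]; rfl
      _ ≤ dist (G ⟨x, hx⟩) (Φ (φ l) ⟨x, hx⟩) := dist_le_pi_dist _ _ _
      _ < ε := hl ⟨x, hx⟩
  have hpt : ∀ i, i ≤ k → ∀ x ∈ K,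
      Tendsto (fun l => iteratedFDeriv ℝ i (α (φ l)) x) atTop (𝓝 (g i x)) :=
    fun i hi x hx => (huc i hi).tendsto_at hx
  have key : ∀ (A B : ContinuousMultilinearMap ℝ
      (fun _ : Fin 0 => EuclideanSpace ℝ (Fin 2)) ℝ), dist (A 0) (B 0) ≤ dist A B := by
    intro A B
    rw [dist_eq_norm, dist_eq_norm]
    calc ‖A 0 - B 0‖ = ‖(A - B) 0‖ := by simp
      _ ≤ ‖A - B‖ * ∏ i : Fin 0, ‖(0 : Fin 0 → EuclideanSpace ℝ (Fin 2)) i‖ :=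
          (A - B).le_opNorm 0
      _ = ‖A - B‖ := by simp
  have hα0 : ∀ x ∈ K, Tendsto (fun l => α (φ l) x) atTop (𝓝 (g 0 x 0)) := by
    intro x hx
    have h := hpt 0 (Nat.zero_le k) x hx
    rw [tendsto_iff_dist_tendsto_zero] at h ⊢
    refine squeeze_zero (fun l => dist_nonneg) (fun l => ?_) h
    calc dist (α (φ l) x) ((g 0 x) 0)
        = dist ((iteratedFDeriv ℝ 0 (α (φ l)) x) 0) ((g 0 x) 0) := by
          rw [iteratedFDeriv_zero_apply]
      _ ≤ dist (iteratedFDeriv ℝ 0 (α (φ l)) x) (g 0 x) := key _ _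
  refine ⟨φ, hφ, g, ?_, ?_, ?_, ?_, ?_, ?_, ?_, ?_⟩
  · intro i hi
    rw [continuousOn_iff_continuous_restrict]
    have : K.domRestrict (g i) = fun x : ↥K => G x ⟨i, Nat.lt_succ_of_le hi⟩ :=
      funext fun x => hgK i hi x
    rw [this]
    exact (continuous_apply _).comp G.continuous
  · exact huc
  · intro x hx
    constructor
    · exact ge_of_tendsto' (hα0 x hx) (fun l => (hbound (φ l) x hx).1)
    · exact le_of_tendsto' (hα0 x hx) (fun l => (hbound (φ l) x hx).2)
  · intro x hx
    have hxK : x ∈ K := hKc.frontier_subset hx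
    have h1 := hα0 x hxK
    have h2 : Tendsto (fun _ : ℕ => αmin) atTop (𝓝 αmin) := tendsto_const_nhds
    have : (fun l => α (φ l) x) = fun _ => αmin := funext fun l => hfront (φ l) x hx
    rw [this] at h1
    exact tendsto_nhds_unique h1 h2
  · intro i h1i hik x hx
    have hxK : x ∈ K := hKc.frontier_subset hx
    have h1 := hpt i hik x hxK
    have : (fun l => iteratedFDeriv ℝ i (α (φ l)) x) = fun _ => S i x :=
      funext fun l => hS (φ l) i h1i hik x hx
    rw [this] at h1
    exact tendsto_nhds_unique h1 tendsto_const_nhds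
  · -- integral
    haveI : IsFiniteMeasure (volume.restrict K) :=
      ⟨by rw [Measure.restrict_apply_univ]; exact hK.measure_lt_top⟩
    have hint : Tendsto (fun l => ∫ x in K, α (φ l) x) atTop
        (𝓝 (∫ x in K, g 0 x 0)) := by
      refine MeasureTheory.tendsto_integral_of_dominated_convergence
        (fun _ => max |αmin| |αmax|)
        (fun l => ((hsmooth (φ l)).continuous.aestronglyMeasurable).restrict) ?_ ?_ ?_
      · exact integrable_const _
      · intro l
        rw [ae_restrict_iff' hKc.measurableSet]
        filter_upwards with x hx
        rw [Real.norm_eq_abs, abs_le]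
        constructor
        · exact le_trans (neg_le_neg (le_max_left |αmin| |αmax|))
            (le_trans (neg_abs_le αmin) (hbound (φ l) x hx).1)
        · exact le_trans (hbound (φ l) x hx).2 (le_trans (le_abs_self αmax)
            (le_max_right _ _))
      · rw [ae_restrict_iff' hKc.measurableSet]
        filter_upwards with x hx
        exact hα0 x hx
    have h2 : Tendsto (fun l : ℕ => L₁) atTop (𝓝 L₁) := tendsto_const_nhds
    have : (fun l => ∫ x in K, α (φ l) x) = fun _ : ℕ => L₁ :=
      funext fun l => hvol (φ l)
    rw [this] at hint
    exact tendsto_nhds_unique hint h2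
  · intro i hi x hx
    refine le_of_tendsto' ((hpt i hi x hx).norm) (fun l => hCk (φ l) i hi x hx)
  · intro x hx y hy
    refine le_of_tendsto' (((hpt k le_rfl x hx).sub (hpt k le_rfl y hy)).norm)
      (fun l => hLip (φ l) x hx y hy)
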